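/- The pebbling number of the book graph B_2 = K_{1,2} □ P_2 is 8. -/

import Mathlib

open SimpleGraph

variable {V : Type*}

/-- A single pebbling move: remove two pebbles from `u`, add one to a neighbor `v`. -/
def PebblingMove (G : SimpleGraph V) (c c' : V → ℕ) : Prop :=
  ∃ u v, G.Adj u v ∧ 2 ≤ c u ∧
    c' u = c u - 2 ∧ c' v = c v + 1 ∧ ∀ w, w ≠ u → w ≠ v → c' w = c w

/-- `c'` is reachable from `c` by a sequence of pebbling moves. -/
def PebblingReach (G : SimpleGraph V) (c c' : V → ℕ) : Prop :=
  Relation.ReflTransGen (PebblingMove G) c c'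

/-- A configuration is `t`-fold `r`-solvable if some sequence of pebbling moves
places at least `t` pebbles on `r`. -/
def PebblingSolvable (G : SimpleGraph V) (c : V → ℕ) (r : V) (t : ℕ) : Prop :=
  ∃ c', PebblingReach G c c' ∧ t ≤ c' r

variable [Fintype V]

/-- The set of sizes `m` such that every configuration of size `m` is
`t`-fold `r`-solvable for every target `r`. -/
def pebblingSet (G : SimpleGraph V) (t : ℕ) : Set ℕ :=
  {m | ∀ c : V → ℕ, (∑ v, c v) = m → ∀ r : V, PebblingSolvable G c r t}

/-- The `t`-fold pebbling number, as an extended natural number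
(`⊤` when no bound exists, e.g. for disconnected graphs). -/
noncomputable def pebblingNumber (G : SimpleGraph V) (t : ℕ) : ℕ∞ :=
  sInf ((↑) '' pebblingSet G t)

/-- A configuration is cover-solvable if pebbling moves can reach a configuration
with at least one pebble on every vertex. -/
def IsCoverSolvable (G : SimpleGraph V) (c : V → ℕ) : Prop :=
  ∃ c', PebblingReach G c c' ∧ ∀ v : V, 1 ≤ c' v

/-- The cover pebbling number. -/
noncomputable def coverPebblingNumber (G : SimpleGraph V) : ℕ∞ :=
  sInf ((↑) '' {m : ℕ | ∀ c : V → ℕ, (∑ v, c v) = m → IsCoverSolvable G c})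

/-- The optimal pebbling number: the least size of a single configuration that is
`r`-solvable for every vertex `r`. -/
noncomputable def optimalPebblingNumber (G : SimpleGraph V) : ℕ∞ :=
  sInf ((↑) '' {m : ℕ | ∃ c : V → ℕ, (∑ v, c v) = m ∧ ∀ r : V, PebblingSolvable G c r 1})

/-- The book graph `B n = K_{1,n} □ P₂`. -/
def bookGraph (n : ℕ) : SimpleGraph ((Fin 1 ⊕ Fin n) × Fin 2) :=
  (completeBipartiteGraph (Fin 1) (Fin n)).boxProd (pathGraph 2)

/-! ### Auxiliary material -/

section Aux

abbrev PebV : Type := (Fin 1 ⊕ Fin 2) × Fin 2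

instance : DecidableRel (bookGraph 2).Adj := fun x y =>
  decidable_of_iff
    ((x.1.isLeft ∧ y.1.isRight ∨ x.1.isRight ∧ y.1.isLeft) ∧ x.2 = y.2 ∨
      ((x.2 : ℕ) + 1 = y.2 ∨ (y.2 : ℕ) + 1 = x.2) ∧ x.1 = y.1)
    (by rw [bookGraph, boxProd_adj, pathGraph_adj, completeBipartiteGraph_adj])

def vh0 : PebV := (Sum.inl 0, 0)
def vh1 : PebV := (Sum.inl 0, 1)
def va0 : PebV := (Sum.inr 0, 0)
def va1 : PebV := (Sum.inr 0, 1)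
def vb0 : PebV := (Sum.inr 1, 0)
def vb1 : PebV := (Sum.inr 1, 1)

lemma sum_expand (c : PebV → ℕ) :
    ∑ v, c v = c vh0 + c vh1 + c va0 + c va1 + c vb0 + c vb1 := by
  simp [Fintype.sum_prod_type, Fintype.sum_sum_type, Fin.sum_univ_two,
    vh0, vh1, va0, va1, vb0, vb1]
  ring

lemma reach_pump [DecidableEq V] {G : SimpleGraph V} {u v : V} (hadj : G.Adj u v)
    (c : V → ℕ) (k : ℕ) (hk : 2 * k ≤ c u) :
    ∃ c', PebblingReach G c c' ∧ c' u = c u - 2 * k ∧ c' v = c v + k ∧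
      ∀ w, w ≠ u → w ≠ v → c' w = c w := by
  induction k with
  | zero => exact ⟨c, Relation.ReflTransGen.refl, by omega, rfl, fun _ _ _ => rfl⟩
  | succ n ih =>
    obtain ⟨c1, hr, hu, hv, ho⟩ := ih (by omega)
    have huv : u ≠ v := G.ne_of_adj hadj
    refine ⟨fun w => if w = u then c1 u - 2 else if w = v then c1 v + 1 else c1 w,
      Relation.ReflTransGen.tail hr
        ⟨u, v, hadj, by omega, by simp, by simp [huv.symm, Ne.symm huv], ?_⟩, ?_, ?_, ?_⟩
    · intro w hw1 hw2; simp [hw1, hw2]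
    · simp; omega
    · simp [Ne.symm huv]; omega
    · intro w hw1 hw2; simp [hw1, hw2]; exact ho w hw1 hw2

lemma solve_a0 (c : PebV → ℕ) (k i : ℕ) (hk : k ≤ c vb1 / 2)
    (hi : i ≤ (c vh1 + (c vb1 / 2 - k)) / 2)
    (h : 1 ≤ c va0 + (c vh0 + (c vb0 + k) / 2 + i) / 2
          + (c va1 + ((c vh1 + (c vb1 / 2 - k)) / 2 - i)) / 2) :
    PebblingSolvable (bookGraph 2) c va0 1 := by
  obtain ⟨c1, r1, u1, v1, o1⟩ := reach_pump (G := bookGraph 2) (u := vb1) (v := vb0)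
    (by decide) c k (by omega)
  have e1h0 : c1 vh0 = c vh0 := o1 vh0 (by decide) (by decide)
  have e1h1 : c1 vh1 = c vh1 := o1 vh1 (by decide) (by decide)
  have e1a0 : c1 va0 = c va0 := o1 va0 (by decide) (by decide)
  have e1a1 : c1 va1 = c va1 := o1 va1 (by decide) (by decide)
  obtain ⟨c2, r2, u2, v2, o2⟩ := reach_pump (G := bookGraph 2) (u := vb1) (v := vh1)
    (by decide) c1 (c vb1 / 2 - k) (by omega)
  have e2h0 : c2 vh0 = c1 vh0 := o2 vh0 (by decide) (by decide)
  have e2a0 : c2 va0 = c1 va0 := o2 va0 (by decide) (by decide)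
  have e2a1 : c2 va1 = c1 va1 := o2 va1 (by decide) (by decide)
  have e2b0 : c2 vb0 = c1 vb0 := o2 vb0 (by decide) (by decide)
  obtain ⟨c3, r3, u3, v3, o3⟩ := reach_pump (G := bookGraph 2) (u := vh1) (v := vh0)
    (by decide) c2 i (by omega)
  have e3a0 : c3 va0 = c2 va0 := o3 va0 (by decide) (by decide)
  have e3a1 : c3 va1 = c2 va1 := o3 va1 (by decide) (by decide)
  have e3b0 : c3 vb0 = c2 vb0 := o3 vb0 (by decide) (by decide)
  obtain ⟨c4, r4, u4, v4, o4⟩ := reach_pump (G := bookGraph 2) (u := vh1) (v := va1)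
    (by decide) c3 ((c vh1 + (c vb1 / 2 - k)) / 2 - i) (by omega)
  have e4h0 : c4 vh0 = c3 vh0 := o4 vh0 (by decide) (by decide)
  have e4a0 : c4 va0 = c3 va0 := o4 va0 (by decide) (by decide)
  have e4b0 : c4 vb0 = c3 vb0 := o4 vb0 (by decide) (by decide)
  obtain ⟨c5, r5, u5, v5, o5⟩ := reach_pump (G := bookGraph 2) (u := vb0) (v := vh0)
    (by decide) c4 ((c vb0 + k) / 2) (by omega)
  have e5a0 : c5 va0 = c4 va0 := o5 va0 (by decide) (by decide)
  have e5a1 : c5 va1 = c4 va1 := o5 va1 (by decide) (by decide)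
  obtain ⟨c6, r6, u6, v6, o6⟩ := reach_pump (G := bookGraph 2) (u := vh0) (v := va0)
    (by decide) c5 (c5 vh0 / 2) (by omega)
  have e6a1 : c6 va1 = c5 va1 := o6 va1 (by decide) (by decide)
  obtain ⟨c7, r7, u7, v7, o7⟩ := reach_pump (G := bookGraph 2) (u := va1) (v := va0)
    (by decide) c6 (c6 va1 / 2) (by omega)
  refine ⟨c7, Relation.ReflTransGen.trans r1 (Relation.ReflTransGen.trans r2
    (Relation.ReflTransGen.trans r3 (Relation.ReflTransGen.trans r4
    (Relation.ReflTransGen.trans r5 (Relation.ReflTransGen.trans r6 r7))))), by omega⟩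

lemma solve_h0 (c : PebV → ℕ) (k m : ℕ) (hk : k ≤ c va1 / 2) (hm : m ≤ c vb1 / 2)
    (h : 1 ≤ c vh0 + (c va0 + k) / 2 + (c vb0 + m) / 2
          + (c vh1 + (c va1 / 2 - k) + (c vb1 / 2 - m)) / 2) :
    PebblingSolvable (bookGraph 2) c vh0 1 := by
  obtain ⟨c1, r1, u1, v1, o1⟩ := reach_pump (G := bookGraph 2) (u := va1) (v := va0)
    (by decide) c k (by omega)
  have e1h0 : c1 vh0 = c vh0 := o1 vh0 (by decide) (by decide)
  have e1h1 : c1 vh1 = c vh1 := o1 vh1 (by decide) (by decide)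
  have e1b0 : c1 vb0 = c vb0 := o1 vb0 (by decide) (by decide)
  have e1b1 : c1 vb1 = c vb1 := o1 vb1 (by decide) (by decide)
  obtain ⟨c2, r2, u2, v2, o2⟩ := reach_pump (G := bookGraph 2) (u := va1) (v := vh1)
    (by decide) c1 (c va1 / 2 - k) (by omega)
  have e2h0 : c2 vh0 = c1 vh0 := o2 vh0 (by decide) (by decide)
  have e2a0 : c2 va0 = c1 va0 := o2 va0 (by decide) (by decide)
  have e2b0 : c2 vb0 = c1 vb0 := o2 vb0 (by decide) (by decide)
  have e2b1 : c2 vb1 = c1 vb1 := o2 vb1 (by decide) (by decide)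
  obtain ⟨c3, r3, u3, v3, o3⟩ := reach_pump (G := bookGraph 2) (u := vb1) (v := vb0)
    (by decide) c2 m (by omega)
  have e3h0 : c3 vh0 = c2 vh0 := o3 vh0 (by decide) (by decide)
  have e3h1 : c3 vh1 = c2 vh1 := o3 vh1 (by decide) (by decide)
  have e3a0 : c3 va0 = c2 va0 := o3 va0 (by decide) (by decide)
  obtain ⟨c4, r4, u4, v4, o4⟩ := reach_pump (G := bookGraph 2) (u := vb1) (v := vh1)
    (by decide) c3 (c vb1 / 2 - m) (by omega)
  have e4h0 : c4 vh0 = c3 vh0 := o4 vh0 (by decide) (by decide)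
  have e4a0 : c4 va0 = c3 va0 := o4 va0 (by decide) (by decide)
  have e4b0 : c4 vb0 = c3 vb0 := o4 vb0 (by decide) (by decide)
  obtain ⟨c5, r5, u5, v5, o5⟩ := reach_pump (G := bookGraph 2) (u := va0) (v := vh0)
    (by decide) c4 ((c va0 + k) / 2) (by omega)
  have e5h1 : c5 vh1 = c4 vh1 := o5 vh1 (by decide) (by decide)
  have e5b0 : c5 vb0 = c4 vb0 := o5 vb0 (by decide) (by decide)
  obtain ⟨c6, r6, u6, v6, o6⟩ := reach_pump (G := bookGraph 2) (u := vb0) (v := vh0)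
    (by decide) c5 ((c vb0 + m) / 2) (by omega)
  have e6h1 : c6 vh1 = c5 vh1 := o6 vh1 (by decide) (by decide)
  obtain ⟨c7, r7, u7, v7, o7⟩ := reach_pump (G := bookGraph 2) (u := vh1) (v := vh0)
    (by decide) c6 (c6 vh1 / 2) (by omega)
  refine ⟨c7, Relation.ReflTransGen.trans r1 (Relation.ReflTransGen.trans r2
    (Relation.ReflTransGen.trans r3 (Relation.ReflTransGen.trans r4
    (Relation.ReflTransGen.trans r5 (Relation.ReflTransGen.trans r6 r7))))), by omega⟩

set_option maxRecDepth 100000 in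
set_option synthInstance.maxSize 2000 in
set_option synthInstance.maxHeartbeats 1000000 in
set_option maxHeartbeats 10000000 in
lemma arith_a0 : ∀ p < 9, ∀ q < 9-p, ∀ x < 9-p-q, ∀ y < 9-p-q-x, ∀ s < 9-p-q-x-y,
    ∃ k < 5, k ≤ (8-p-q-x-y-s)/2 ∧ ∃ i < 9, i ≤ (q + ((8-p-q-x-y-s)/2 - k))/2 ∧
      1 ≤ x + (p + (s + k)/2 + i)/2 + (y + ((q + ((8-p-q-x-y-s)/2 - k))/2 - i))/2 := by
  decide

set_option maxRecDepth 100000 in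
set_option synthInstance.maxSize 2000 in
set_option synthInstance.maxHeartbeats 1000000 in
set_option maxHeartbeats 10000000 in
lemma arith_h0 : ∀ p < 9, ∀ q < 9-p, ∀ x < 9-p-q, ∀ y < 9-p-q-x, ∀ s < 9-p-q-x-y,
    ∃ k < 5, k ≤ y/2 ∧ ∃ m < 5, m ≤ (8-p-q-x-y-s)/2 ∧
      1 ≤ p + (x + k)/2 + (s + m)/2 + (q + (y/2 - k) + ((8-p-q-x-y-s)/2 - m))/2 := by
  decide

lemma solvable_va0 (c : PebV → ℕ) (hc : ∑ v, c v = 8) :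
    PebblingSolvable (bookGraph 2) c va0 1 := by
  have hs : c vh0 + c vh1 + c va0 + c va1 + c vb0 + c vb1 = 8 := by
    rw [← sum_expand]; exact hc
  have ht : 8 - c vh0 - c vh1 - c va0 - c va1 - c vb0 = c vb1 := by omega
  obtain ⟨k, -, hk, i, -, hi, hle⟩ := arith_a0 (c vh0) (by omega) (c vh1) (by omega)
    (c va0) (by omega) (c va1) (by omega) (c vb0) (by omega)
  rw [ht] at hk hi hle
  exact solve_a0 c k i hk hi hle

lemma solvable_vh0 (c : PebV → ℕ) (hc : ∑ v, c v = 8) :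
    PebblingSolvable (bookGraph 2) c vh0 1 := by
  have hs : c vh0 + c vh1 + c va0 + c va1 + c vb0 + c vb1 = 8 := by
    rw [← sum_expand]; exact hc
  have ht : 8 - c vh0 - c vh1 - c va0 - c va1 - c vb0 = c vb1 := by omega
  obtain ⟨k, -, hk, m, -, hm, hle⟩ := arith_h0 (c vh0) (by omega) (c vh1) (by omega)
    (c va0) (by omega) (c va1) (by omega) (c vb0) (by omega)
  rw [ht] at hm hle
  exact solve_h0 c k m hk hm hle

lemma solvable_map {G : SimpleGraph V} (e : G ≃g G) {c : V → ℕ} {r : V} {t : ℕ}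
    (h : PebblingSolvable G c r t) :
    PebblingSolvable G (c ∘ ⇑e.symm) (e r) t := by
  obtain ⟨c', hr, h1⟩ := h
  refine ⟨c' ∘ ⇑e.symm, ?_, by simpa using h1⟩
  refine Relation.ReflTransGen.lift (fun f => f ∘ ⇑e.symm) ?_ _ _ hr
  rintro a b ⟨u, v, hadj, h2, hu, hv, ho⟩
  refine ⟨e u, e v, ?_, by simpa using h2, by simpa using hu, by simpa using hv, ?_⟩
  · exact e.map_adj_iff.mpr hadj
  · intro w hw1 hw2
    have g1 : e.symm w ≠ u := fun hh => hw1 (by rw [← hh, RelIso.apply_symm_apply])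
    have g2 : e.symm w ≠ v := fun hh => hw2 (by rw [← hh, RelIso.apply_symm_apply])
    exact ho (e.symm w) g1 g2

def flipEquiv : PebV ≃ PebV :=
  ⟨fun x => (x.1, x.2 + 1), fun x => (x.1, x.2 + 1), by decide, by decide⟩

lemma flip_adj : ∀ a b : PebV,
    (bookGraph 2).Adj (flipEquiv a) (flipEquiv b) ↔ (bookGraph 2).Adj a b := by decide

def flipIso : bookGraph 2 ≃g bookGraph 2 := ⟨flipEquiv, fun {a b} => flip_adj a b⟩

def swapEquiv : PebV ≃ PebV :=
  ⟨fun x => (Sum.map id (fun i : Fin 2 => i + 1) x.1, x.2),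
   fun x => (Sum.map id (fun i : Fin 2 => i + 1) x.1, x.2), by decide, by decide⟩

lemma swap_adj : ∀ a b : PebV,
    (bookGraph 2).Adj (swapEquiv a) (swapEquiv b) ↔ (bookGraph 2).Adj a b := by decide

def swapIso : bookGraph 2 ≃g bookGraph 2 := ⟨swapEquiv, fun {a b} => swap_adj a b⟩

lemma transport (e : bookGraph 2 ≃g bookGraph 2) (r : PebV)
    (H : ∀ c : PebV → ℕ, ∑ v, c v = 8 → PebblingSolvable (bookGraph 2) c r 1) :
    ∀ c : PebV → ℕ, ∑ v, c v = 8 → PebblingSolvable (bookGraph 2) c (e r) 1 := by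
  intro c hc
  have hc' : ∑ v, (c ∘ ⇑e) v = 8 := by
    rw [← hc]; exact Fintype.sum_equiv e.toEquiv _ _ (fun v => rfl)
  have h := solvable_map e (H (c ∘ ⇑e) hc')
  have hcc : (c ∘ ⇑e) ∘ ⇑e.symm = c := by
    funext w; simp
  rwa [hcc] at h

lemma mem_eight : (8 : ℕ) ∈ pebblingSet (bookGraph 2) 1 := by
  have Ha0 := solvable_va0
  have Hh0 := solvable_vh0
  have Ha1 := transport flipIso va0 Ha0
  have Hh1 := transport flipIso vh0 Hh0
  have Hb0 := transport swapIso va0 Ha0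
  have Hb1 := transport swapIso va1 Ha1
  intro c hc r
  have h0 : flipIso va0 = va1 := by decide
  have h1 : flipIso vh0 = vh1 := by decide
  have h2 : swapIso va0 = vb0 := by decide
  have h3 : swapIso va1 = vb1 := by decide
  rw [h0] at Ha1; rw [h1] at Hh1; rw [h2] at Hb0; rw [h3] at Hb1
  obtain ⟨s | s, j⟩ := r
  · fin_cases s <;> fin_cases j
    · exact Hh0 c hc
    · exact Hh1 c hc
  · fin_cases s <;> fin_cases j
    · exact Ha0 c hc
    · exact Ha1 c hc
    · exact Hb0 c hc
    · exact Hb1 c hc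

end Aux

section Wt

def wt : PebV → ℕ := fun x =>
  if x = va0 then 8 else if x = vh0 then 4 else if x = va1 then 4
  else if x = vh1 then 2 else if x = vb0 then 2 else 1

lemma wt_adj : ∀ u v : PebV, (bookGraph 2).Adj u v → wt v ≤ 2 * wt u := by decide

lemma wt_move {c c' : PebV → ℕ} (h : PebblingMove (bookGraph 2) c c') :
    ∑ v, wt v * c' v ≤ ∑ v, wt v * c v := by
  obtain ⟨u, v, hadj, h2, hu, hv, ho⟩ := h
  have huv : u ≠ v := (bookGraph 2).ne_of_adj hadj
  have hF : (fun x => wt x * c' x) =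
      Function.update (Function.update (fun x => wt x * c x) u (wt u * (c u - 2))) v
        (wt v * (c v + 1)) := by
    funext w
    rcases eq_or_ne w v with rfl | hwv
    · simp [hv]
    · rcases eq_or_ne w u with rfl | hwu
      · simp [Function.update_of_ne hwv, Function.update_self, hu]
      · simp [Function.update_of_ne hwv, Function.update_of_ne hwu, ho w hwu hwv]
  have hL : ∑ x, wt x * c' x
      = wt v * (c v + 1) + (wt u * (c u - 2) + ∑ x ∈ (Finset.univ \ {v}) \ {u}, wt x * c x) := by
    rw [show (fun x => wt x * c' x) = _ from hF]
    rw [Finset.sum_update_of_mem (Finset.mem_univ v)]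
    rw [Finset.sum_update_of_mem (by simp [huv] : u ∈ Finset.univ \ {v})]
  have hR : ∑ x, wt x * c x
      = wt v * c v + (wt u * c u + ∑ x ∈ (Finset.univ \ {v}) \ {u}, wt x * c x) := by
    rw [Finset.sum_eq_add_sum_sdiff_singleton_of_mem (Finset.mem_univ v) (fun x => wt x * c x),
      Finset.sum_eq_add_sum_sdiff_singleton_of_mem (by simp [huv] : u ∈ Finset.univ \ {v})
        (fun x => wt x * c x)]
  have e1 : wt u * (c u - 2) + wt u * 2 = wt u * c u := by
    rw [← Nat.mul_add, Nat.sub_add_cancel h2]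
  have e2 : wt v * (c v + 1) = wt v * c v + wt v := by ring
  have e3 : wt v ≤ 2 * wt u := wt_adj u v hadj
  rw [hL, hR]
  nlinarith [e1, e2, e3]

lemma wt_reach {c c' : PebV → ℕ} (h : PebblingReach (bookGraph 2) c c') :
    ∑ v, wt v * c' v ≤ ∑ v, wt v * c v := by
  have h' : Relation.ReflTransGen (PebblingMove (bookGraph 2)) c c' := h
  induction h' with
  | refl => exact le_rfl
  | tail hcb h2 ih => exact le_trans (wt_move h2) (ih hcb)

lemma lower (m : ℕ) (hm : m ∈ pebblingSet (bookGraph 2) 1) : 8 ≤ m := by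
  classical
  set cfg : PebV → ℕ := fun v => if v = vb1 then m else 0 with hcfg
  have hsum : ∑ v, cfg v = m := by
    rw [sum_expand]
    simp [hcfg, vh0, vh1, va0, va1, vb0, vb1]
  obtain ⟨c', hr, h1⟩ := hm cfg hsum va0
  have hw := wt_reach hr
  rw [sum_expand (fun v => wt v * c' v), sum_expand (fun v => wt v * cfg v)] at hw
  have w1 : wt vh0 = 4 := by decide
  have w2 : wt vh1 = 2 := by decide
  have w3 : wt va0 = 8 := by decide
  have w4 : wt va1 = 4 := by decide
  have w5 : wt vb0 = 2 := by decide
  have w6 : wt vb1 = 1 := by decide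
  have g1 : cfg vh0 = 0 := by simp [hcfg, vh0, vb1]
  have g2 : cfg vh1 = 0 := by simp [hcfg, vh1, vb1]
  have g3 : cfg va0 = 0 := by simp [hcfg, va0, vb1]
  have g4 : cfg va1 = 0 := by simp [hcfg, va1, vb1]
  have g5 : cfg vb0 = 0 := by simp [hcfg, vb0, vb1]
  have g6 : cfg vb1 = m := by simp [hcfg]
  simp only [w1, w2, w3, w4, w5, w6, g1, g2, g3, g4, g5, g6] at hw
  omega

end Wt

/-- The pebbling number of the book graph `B 2` is `8`. -/
theorem pebblingNumber_bookGraph_two :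
    pebblingNumber (bookGraph 2) 1 = (8 : ℕ∞) := by
  apply le_antisymm
  · have h8 : ((8 : ℕ) : ℕ∞) ∈ ((↑) '' pebblingSet (bookGraph 2) 1 : Set ℕ∞) :=
      ⟨8, mem_eight, rfl⟩
    simpa [pebblingNumber] using sInf_le h8
  · apply le_sInf
    rintro x ⟨m, hm, rfl⟩
    exact_mod_cast lower m hm
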